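/- Let G be a group acting on a finite set X, let x ∈ X, and let H be a subgroup of G conjugate to G_x (i.e. H = g⁻¹G_x g for some g ∈ G). Then the number of elements z in the orbit Gx whose stabilizer equals H is [N_G(H) : H], the index of H in its normalizer. -/

import Mathlib

/-- The conjugate subgroup `g⁻¹ H g`. -/
def conjSub {G : Type*} [Group G] (g : G) (H : Subgroup G) : Subgroup G :=
  H.map (MulAut.conj g⁻¹).toMonoidHom

private theorem stab_smul_mem_iff {G : Type*} [Group G] {X : Type*} [MulAction G X]
    (k : G) (y : X) (m : G) :
    m ∈ MulAction.stabilizer G (k • y) ↔ k⁻¹ * m * k ∈ MulAction.stabilizer G y := by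
  simp only [MulAction.mem_stabilizer_iff]
  constructor
  · intro h
    calc (k⁻¹ * m * k) • y = k⁻¹ • m • k • y := by simp [mul_smul]
      _ = k⁻¹ • k • y := by rw [h]
      _ = y := inv_smul_smul k y
  · intro h
    have h1 : m * k = k * (k⁻¹ * m * k) := by group
    calc m • k • y = (m * k) • y := (mul_smul m k y).symm
      _ = (k * (k⁻¹ * m * k)) • y := by rw [h1]
      _ = k • (k⁻¹ * m * k) • y := mul_smul _ _ _
      _ = k • y := by rw [h]

private theorem stab_smul_eq_iff {G : Type*} [Group G] {X : Type*} [MulAction G X]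
    (k : G) (y : X) :
    MulAction.stabilizer G (k • y) = MulAction.stabilizer G y ↔
      k ∈ Subgroup.normalizer (MulAction.stabilizer G y : Set G) := by
  constructor
  · intro hst
    rw [Subgroup.mem_normalizer_iff]
    intro h
    constructor
    · intro hh
      rw [← hst, stab_smul_mem_iff]
      have : k⁻¹ * (k * h * k⁻¹) * k = h := by group
      rwa [this]
    · intro hh
      rw [← hst, stab_smul_mem_iff] at hh
      have : k⁻¹ * (k * h * k⁻¹) * k = h := by group
      rwa [this] at hh
  · intro hk
    rw [Subgroup.mem_normalizer_iff] at hk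
    ext m
    rw [stab_smul_mem_iff, hk (k⁻¹ * m * k)]
    have : k * (k⁻¹ * m * k) * k⁻¹ = m := by group
    rw [this]

private theorem aux_card {G : Type*} [Group G] {X : Type*} [MulAction G X] (y : X) :
    Nat.card {z : X // z ∈ MulAction.orbit G y ∧
        MulAction.stabilizer G z = MulAction.stabilizer G y} =
      (MulAction.stabilizer G y).relIndex (Subgroup.normalizer (MulAction.stabilizer G y : Set G)) := by
  set H := MulAction.stabilizer G y with hH
  set N := Subgroup.normalizer (H : Set G) with hN
  let f : N → {z : X // z ∈ MulAction.orbit G y ∧ MulAction.stabilizer G z = H} :=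
    fun n => ⟨(n : G) • y, MulAction.mem_orbit y (n : G), (stab_smul_eq_iff (n : G) y).mpr n.2⟩
  let F : (N ⧸ H.subgroupOf N) → {z : X // z ∈ MulAction.orbit G y ∧ MulAction.stabilizer G z = H} :=
    Quotient.lift f (by
      intro n₁ n₂ h
      have hmem : (n₁⁻¹ * n₂ : N) ∈ H.subgroupOf N := QuotientGroup.leftRel_apply.mp h
      rw [Subgroup.mem_subgroupOf] at hmem
      have hmem' : ((n₁ : G)⁻¹ * (n₂ : G)) • y = y := hmem
      apply Subtype.ext
      show (n₁ : G) • y = (n₂ : G) • y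
      calc (n₁ : G) • y = (n₁ : G) • ((n₁ : G)⁻¹ * (n₂ : G)) • y := by rw [hmem']
        _ = ((n₁ : G) * ((n₁ : G)⁻¹ * (n₂ : G))) • y := (mul_smul _ _ _).symm
        _ = (n₂ : G) • y := by rw [mul_inv_cancel_left])
  have hbij : Function.Bijective F := by
    constructor
    · intro a b
      refine Quotient.inductionOn₂ a b ?_
      intro n₁ n₂ h
      have h' : (n₁ : G) • y = (n₂ : G) • y := congrArg Subtype.val h
      have hmem : (n₁⁻¹ * n₂ : N) ∈ H.subgroupOf N := by
        rw [Subgroup.mem_subgroupOf]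
        show ((n₁ : G)⁻¹ * (n₂ : G)) • y = y
        rw [mul_smul, ← h', inv_smul_smul]
      exact Quotient.sound (QuotientGroup.leftRel_apply.mpr hmem)
    · rintro ⟨z, hz, hstab⟩
      rw [MulAction.mem_orbit_iff] at hz
      obtain ⟨k, rfl⟩ := hz
      have hkN : k ∈ N := (stab_smul_eq_iff k y).mp hstab
      exact ⟨QuotientGroup.mk (⟨k, hkN⟩ : N), rfl⟩
  rw [Subgroup.relIndex, Subgroup.index_eq_card]
  exact (Nat.card_congr (Equiv.ofBijective F hbij)).symm

/-- Let `G` be a group acting on a finite set `X`, let `x ∈ X`,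
and let `H` be a subgroup of `G` conjugate to the stabilizer of `x`
(i.e. `H = g⁻¹ (G_x) g` for some `g`). Then the number of elements `z` of the
orbit of `x` whose stabilizer equals `H` is the index `[N_G(H) : H]`. -/
theorem card_orbit_inter_conjugate_stabilizer_eq_relindex_normalizer
    {G : Type*} [Group G] {X : Type*} [MulAction G X] [Finite X] (x : X)
    (H : Subgroup G) (hH : ∃ g : G, H = conjSub g (MulAction.stabilizer G x)) :
    Nat.card {z : X // z ∈ MulAction.orbit G x ∧ MulAction.stabilizer G z = H} =
      H.relIndex (Subgroup.normalizer (H : Set G)) := by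
  obtain ⟨g, rfl⟩ := hH
  have hHy : conjSub g (MulAction.stabilizer G x) = MulAction.stabilizer G (g⁻¹ • x) := by
    rw [MulAction.stabilizer_smul_eq_stabilizer_map_conj]
    rfl
  rw [hHy, ← MulAction.orbit_smul g⁻¹ x]
  exact aux_card (g⁻¹ • x)
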